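/- arXiv:1307.0289 — 4 statements merged into one kernel-verified Lean document; each statement's English description precedes it below -/
import Mathlib

section
/- In any FILL-category, for all objects A, B, C there exists an arrow ((A ⊸ B) ⅋ C) → (A ⊸ (B ⅋ C)). -/
open CategoryTheory MonoidalCategory MonoidalClosed

universe v u

/-- A FILL-category: a symmetric monoidal closed category `(⊗, I, ⊸)` equipped with
a second symmetric monoidal structure `(⅋, ⊥)` and natural weak distributivity arrows
`A ⊗ (B ⅋ C) ⟶ (A ⊗ B) ⅋ C`. -/
class FILLCategory (C : Type u) [Category.{v} C] [MonoidalCategory C]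
    [SymmetricCategory C] [MonoidalClosed C] where
  par : C → C → C
  bot : C
  parMap : ∀ {A A' B B' : C}, (A ⟶ A') → (B ⟶ B') → (par A B ⟶ par A' B')
  parMap_id : ∀ A B : C, parMap (𝟙 A) (𝟙 B) = 𝟙 (par A B)
  parAssoc : ∀ A B D : C, par (par A B) D ≅ par A (par B D)
  parLeftUnit : ∀ A : C, par bot A ≅ A
  parRightUnit : ∀ A : C, par A bot ≅ A
  parBraid : ∀ A B : C, par A B ≅ par B A
  wdist : ∀ A B D : C, A ⊗ par B D ⟶ par (A ⊗ B) D
  wdist_natural : ∀ {A A' B B' D D' : C} (f : A ⟶ A') (g : B ⟶ B') (h : D ⟶ D'),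
    (f ⊗ₘ parMap g h) ≫ wdist A' B' D' = wdist A B D ≫ parMap (f ⊗ₘ g) h

open FILLCategory

/-- In any FILL-category there is an arrow `(A ⊸ B) ⅋ C ⟶ A ⊸ (B ⅋ C)`. -/
theorem fill_par_ihom_arrow
    (C : Type u) [Category.{v} C] [MonoidalCategory C] [SymmetricCategory C]
    [MonoidalClosed C] [FILLCategory C] (A B D : C) :
    Nonempty (par ((ihom A).obj B) D ⟶ (ihom A).obj (par B D)) :=
  ⟨MonoidalClosed.curry (wdist A ((ihom A).obj B) D ≫ parMap ((ihom.ev A).app B) (𝟙 D))⟩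
end

section
/- In any FILL-category, for all objects Γ₁, Γ₂, A, B, T₁, T₂ there exists an arrow ((Γ₁ ⊗ A) ⊸ T₁) ⊗ ((Γ₂ ⊗ B) ⊸ T₂) ⊗ Γ₁ ⊗ Γ₂ ⊗ (A ⅋ B) → T₁ ⅋ T₂. -/
open CategoryTheory MonoidalCategory MonoidalClosed

universe v u

open FILLCategory

/-- Base case of soundness for `⅋`-left: there is an arrow
`((Γ₁ ⊗ A) ⊸ T₁) ⊗ ((Γ₂ ⊗ B) ⊸ T₂) ⊗ Γ₁ ⊗ Γ₂ ⊗ (A ⅋ B) ⟶ T₁ ⅋ T₂`. -/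
theorem fill_merge_par_left
    (C : Type u) [Category.{v} C] [MonoidalCategory C] [SymmetricCategory C]
    [MonoidalClosed C] [FILLCategory C] (G1 G2 A B T1 T2 : C) :
    Nonempty ((ihom (G1 ⊗ A)).obj T1 ⊗ (ihom (G2 ⊗ B)).obj T2 ⊗ G1 ⊗ G2 ⊗
      par A B ⟶ par T1 T2) := by
  let F1 := (ihom (G1 ⊗ A)).obj T1
  let F2 := (ihom (G2 ⊗ B)).obj T2
  -- swap the first two factors of a triple tensor
  let swap3 : ∀ X Y Z : C, X ⊗ (Y ⊗ Z) ≅ Y ⊗ (X ⊗ Z) := fun X Y Z =>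
    (α_ X Y Z).symm ≪≫ (β_ X Y ⊗ᵢ Iso.refl Z) ≪≫ α_ Y X Z
  -- evaluation arrows
  let e1 : (F1 ⊗ G1) ⊗ A ⟶ T1 :=
    (α_ F1 G1 A).hom ≫ (β_ F1 (G1 ⊗ A)).hom ≫ (ihom.ev (G1 ⊗ A)).app T1
  let e2 : (F2 ⊗ G2) ⊗ B ⟶ T2 :=
    (α_ F2 G2 B).hom ≫ (β_ F2 (G2 ⊗ B)).hom ≫ (ihom.ev (G2 ⊗ B)).app T2
  -- rearrange the domain
  let d : F1 ⊗ F2 ⊗ G1 ⊗ G2 ⊗ par A B ≅ (F1 ⊗ G1) ⊗ ((F2 ⊗ G2) ⊗ par A B) :=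
    (Iso.refl F1 ⊗ᵢ swap3 F2 G1 (G2 ⊗ par A B)) ≪≫ (α_ F1 G1 _).symm ≪≫
      (Iso.refl (F1 ⊗ G1) ⊗ᵢ (α_ F2 G2 (par A B)).symm)
  let m1 : (F2 ⊗ G2) ⊗ par A B ⟶ par A T2 :=
    ((F2 ⊗ G2) ◁ (parBraid A B).hom) ≫ wdist (F2 ⊗ G2) B A ≫
      parMap e2 (𝟙 A) ≫ (parBraid T2 A).hom
  let m2 : (F1 ⊗ G1) ⊗ par A T2 ⟶ par T1 T2 :=
    wdist (F1 ⊗ G1) A T2 ≫ parMap e1 (𝟙 T2)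
  exact ⟨d.hom ≫ ((F1 ⊗ G1) ◁ m1) ≫ m2⟩
end

section
/- In any FILL-category, for all objects Γ, Γ', A, T, T' there exists an arrow (Γ ⊸ (((A ⊗ Γ') ⊸ T') ⅋ T)) → ((Γ ⊗ A) ⊸ ((Γ' ⊸ T') ⅋ T)). (Soundness of the antecedent propagation rule pl₁.) -/
open CategoryTheory MonoidalCategory MonoidalClosed

universe v u

open FILLCategory

/-- Soundness of the antecedent propagation rule `pl₁`: there is an arrow
`(Γ ⊸ (((A ⊗ Γ') ⊸ T') ⅋ T)) ⟶ ((Γ ⊗ A) ⊸ ((Γ' ⊸ T') ⅋ T))`. -/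
theorem fill_pl1_sound
    (C : Type u) [Category.{v} C] [MonoidalCategory C] [SymmetricCategory C]
    [MonoidalClosed C] [FILLCategory C] (G G' A T T' : C) :
    Nonempty ((ihom G).obj (par ((ihom (A ⊗ G')).obj T') T) ⟶
      (ihom (G ⊗ A)).obj (par ((ihom G').obj T') T)) := by
  set H := (ihom (A ⊗ G')).obj T'
  -- f : A ⊗ H ⟶ (ihom G').obj T'
  have f : A ⊗ H ⟶ (ihom G').obj T' :=
    MonoidalClosed.curry ((α_ G' A H).inv ≫ ((β_ G' A).hom ▷ H) ≫
      ((ihom.ev (A ⊗ G')).app T'))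
  exact ⟨MonoidalClosed.curry ((((β_ G A).hom ▷ _) ≫ (α_ A G _).hom) ≫
    (A ◁ (ihom.ev G).app (par H T)) ≫ wdist A H T ≫ parMap f (𝟙 T))⟩
end

section
/- In any FILL-category, for all objects Γ, Γ', A, T, T' there exists an arrow (Γ ⊸ (T ⅋ A ⅋ (Γ' ⊸ T'))) → (Γ ⊸ (T ⅋ (Γ' ⊸ (T' ⅋ A)))). (Soundness of the succedent propagation rule pr₂.) -/
open CategoryTheory MonoidalCategory MonoidalClosed

universe v u

open FILLCategory

/-- Soundness of the succedent propagation rule `pr₂`: there is an arrow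
`(Γ ⊸ (T ⅋ A ⅋ (Γ' ⊸ T'))) ⟶ (Γ ⊸ (T ⅋ (Γ' ⊸ (T' ⅋ A))))`. -/
theorem fill_pr2_sound
    (C : Type u) [Category.{v} C] [MonoidalCategory C] [SymmetricCategory C]
    [MonoidalClosed C] [FILLCategory C] (G G' A T T' : C) :
    Nonempty ((ihom G).obj (par T (par A ((ihom G').obj T'))) ⟶
      (ihom G).obj (par T ((ihom G').obj (par T' A)))) := by
  refine ⟨(ihom G).map (parMap (𝟙 T) (MonoidalClosed.curry
    ((𝟙 G' ⊗ₘ (parBraid A ((ihom G').obj T')).hom) ≫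
      wdist G' ((ihom G').obj T') A ≫
      parMap ((ihom.ev G').app T') (𝟙 A))))⟩
end
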